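/- For all α, β ∈ Y, the modules M_α and M_β have the same finite images as ℤG-modules: for every finite ℤG-module F, F is a quotient of M_α if and only if F is a quotient of M_β. -/

import Mathlib

noncomputable section

/-- Parameter sequences: `Y = {0,1}^ℕ`; the paper's `λ(n)` (for `n ≥ 1`) is `l (n-1) : Bool`,
with `0 ↔ false` and `1 ↔ true`. -/
abbrev Y : Type := ℕ → Bool

/-- The 𝔽₂-vector space `V` with basis `{e i, f i : i ∈ ℤ}` (basis indexed by `ℤ × Bool`). -/
abbrev Vsp : Type := (ℤ × Bool) →₀ ZMod 2

/-- The basis vector `e i`. -/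
def e (i : ℤ) : Vsp := Finsupp.single (i, false) 1

/-- The basis vector `f i`. -/
def f (i : ℤ) : Vsp := Finsupp.single (i, true) 1

/-- The permutation of the basis swapping `e 0` and `f 0`. -/
def aPerm : Equiv.Perm (ℤ × Bool) := Equiv.swap ((0 : ℤ), false) ((0 : ℤ), true)

/-- The shift permutation of the basis, `e i ↦ e (i+1)`, `f i ↦ f (i+1)`. -/
def tPerm : Equiv.Perm (ℤ × Bool) := (Equiv.addRight (1 : ℤ)).prodCongr (Equiv.refl Bool)

/-- The automorphism of `V` induced by a permutation of the basis, viewed as an automorphism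
of the (multiplicatively written) group `V`. -/
def permAut (σ : Equiv.Perm (ℤ × Bool)) : MulAut (Multiplicative Vsp) :=
  AddEquiv.toMultiplicative (Finsupp.domCongr σ : Vsp ≃+ Vsp)

/-- The automorphism `a` of `V`. -/
def aAut : MulAut (Multiplicative Vsp) := permAut aPerm

/-- The automorphism `t` of `V`. -/
def tAut : MulAut (Multiplicative Vsp) := permAut tPerm

/-- The subgroup `⟨a, t⟩ ≤ GL(V)`. -/
def Asub : Subgroup (MulAut (Multiplicative Vsp)) := Subgroup.closure {aAut, tAut}

/-- The group `G = V ⋊ ⟨a, t⟩ ≅ C₂ ≀ C₂ ≀ C_∞`. -/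
abbrev G : Type := Multiplicative Vsp ⋊[Asub.subtype] ↥Asub

/-- The inclusion `V → G`. -/
def ofV (v : Vsp) : G := SemidirectProduct.inl (Multiplicative.ofAdd v)

/-- A subgroup of `V`, viewed as a subgroup of `G`. -/
def subgroupOfV (H : AddSubgroup Vsp) : Subgroup G :=
  Subgroup.map SemidirectProduct.inl (AddSubgroup.toSubgroup H)

/-- The sequence `c_λ`: for `n ≥ 1`, `c (2n-1) = e n`, `c (2n) = f n` if `λ(n) = 0`, and
`c (2n-1) = f n`, `c (2n) = e n` if `λ(n) = 1`. -/
def cseq (l : Y) (m : ℕ) : Vsp :=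
  if (m % 2 = 1) ↔ (l ((m + 1) / 2 - 1) = false) then e ((m + 1) / 2) else f ((m + 1) / 2)

/-- The subgroup `H_{λ,i} = ⟨e 0, f 0, e (-1), f (-1), …, e (-i), f (-i), c 1, …, c i⟩ ≤ V`. -/
def Hsub (l : Y) (i : ℕ) : AddSubgroup Vsp :=
  AddSubgroup.closure
    ((fun j : ℕ => e (-(j : ℤ))) '' Set.Icc 0 i ∪ (fun j : ℕ => f (-(j : ℤ))) '' Set.Icc 0 i ∪
      cseq l '' Set.Icc 1 i)

/-- The integral group ring `ℤG`. -/
abbrev ZG : Type := MonoidAlgebra ℤ G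

/-- The element of `ℤG` corresponding to `v ∈ V ≤ G`. -/
def zOfV (v : Vsp) : ZG := MonoidAlgebra.of ℤ G (ofV v)

/-- The (left) ideal of the group ring `kG` generated by `{g - 1 : g ∈ S}`; this is the
mirror image of the right ideal `(S - 1)kG` of the paper (all modules are taken as left
modules here, mirroring the right modules of the paper). -/
def grpIdeal (k : Type) [CommRing k] (S : Set G) : Ideal (MonoidAlgebra k G) :=
  Ideal.span ((fun g : G => (MonoidAlgebra.of k G g : MonoidAlgebra k G) - 1) '' S)

/-- The permutation module `U_{λ,i} = 𝔽_{p i}G/(H_{λ,i} - 1)𝔽_{p i}G`. -/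
def Ui (p : ℕ → ℕ) (l : Y) (i : ℕ) : Type :=
  MonoidAlgebra (ZMod (p i)) G ⧸ grpIdeal (ZMod (p i)) (subgroupOfV (Hsub l i) : Set G)

instance (p : ℕ → ℕ) (l : Y) (i : ℕ) : AddCommGroup (Ui p l i) :=
  inferInstanceAs (AddCommGroup
    (MonoidAlgebra (ZMod (p i)) G ⧸ grpIdeal (ZMod (p i)) (subgroupOfV (Hsub l i) : Set G)))

instance (p : ℕ → ℕ) (l : Y) (i : ℕ) : Module (MonoidAlgebra (ZMod (p i)) G) (Ui p l i) :=
  inferInstanceAs (Module (MonoidAlgebra (ZMod (p i)) G)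
    (MonoidAlgebra (ZMod (p i)) G ⧸ grpIdeal (ZMod (p i)) (subgroupOfV (Hsub l i) : Set G)))

/-- The canonical ring homomorphism `ℤG → 𝔽_qG`, reducing coefficients mod `q`. -/
def coeffHom (q : ℕ) : ZG →+* MonoidAlgebra (ZMod q) G :=
  ((MonoidAlgebra.lift ℤ (MonoidAlgebra (ZMod q) G) G) (MonoidAlgebra.of (ZMod q) G)).toRingHom

/-- `U_{λ,i}` as a `ℤG`-module. -/
instance (p : ℕ → ℕ) (l : Y) (i : ℕ) : Module ZG (Ui p l i) :=
  Module.compHom _ (coeffHom (p i))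

/-- The module generator `u_{λ,i} = 1 + (H_{λ,i} - 1)𝔽_{p i}G` of `U_{λ,i}`. -/
def ui (p : ℕ → ℕ) (l : Y) (i : ℕ) : Ui p l i :=
  (Submodule.Quotient.mk 1 :
    MonoidAlgebra (ZMod (p i)) G ⧸ grpIdeal (ZMod (p i)) (subgroupOfV (Hsub l i) : Set G))

/-- The index set `{1, 2, 3, …}` for the sequences `(p_i)` and `(H_{λ,i})`. -/
abbrev Idx : Type := {i : ℕ // 1 ≤ i}

/-- The element `u_λ = (u_{λ,1}, u_{λ,2}, …) ∈ ∏_{i ≥ 1} U_{λ,i}`. -/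
def ul (p : ℕ → ℕ) (l : Y) : ∀ i : Idx, Ui p l i.1 := fun i => ui p l i.1

/-- The module `M_λ`: the cyclic `ℤG`-submodule of `∏_{i ≥ 1} U_{λ,i}` generated by `u_λ`. -/
def Ml (p : ℕ → ℕ) (l : Y) : Submodule ZG (∀ i : Idx, Ui p l i.1) :=
  Submodule.span ZG {ul p l}

/-- The annihilator ideal `J_λ = ann_{ℤG}(u_λ)`. -/
def Jl (p : ℕ → ℕ) (l : Y) : Ideal ZG :=
  LinearMap.ker (LinearMap.toSpanSingleton ZG (∀ i : Idx, Ui p l i.1) (ul p l))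

/-- The submodule `M(N-1)` of `M = M_λ`, spanned by the elements `(x-1)m`, `m ∈ M`, `x ∈ N`. -/
def MlAug (p : ℕ → ℕ) (l : Y) (N : AddSubgroup Vsp) : Submodule ZG ↥(Ml p l) :=
  Submodule.span ZG {z : ↥(Ml p l) | ∃ x ∈ N, ∃ m : ↥(Ml p l), z = (zOfV x - 1) • m}

/-- The ideal `(N - 1)ℤG` for a subgroup `N ≤ V`. -/
def augV (N : AddSubgroup Vsp) : Ideal ZG :=
  Ideal.span ((fun v : Vsp => zOfV v - 1) '' (N : Set Vsp))



-- Part 1: basics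
lemma ofV_add (v w : Vsp) : ofV (v + w) = ofV v * ofV w := by
  simp [ofV, ← map_mul]

lemma ofV_zero : ofV 0 = 1 := by simp [ofV]

lemma zOfV_add (v w : Vsp) : zOfV (v + w) = zOfV v * zOfV w := by
  simp [zOfV, ofV_add]

lemma zOfV_zero : zOfV 0 = 1 := by simp only [zOfV, ofV_zero]; exact map_one (MonoidAlgebra.of ℤ G)

lemma coeffHom_of (q : ℕ) (g : G) :
    coeffHom q (MonoidAlgebra.of ℤ G g) = MonoidAlgebra.of (ZMod q) G g := by
  simp [coeffHom]

lemma coeffHom_single (q : ℕ) (g : G) (c : ℤ) :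
    coeffHom q (MonoidAlgebra.single g c) = MonoidAlgebra.single g (c : ZMod q) := by
  have h1 : (MonoidAlgebra.single g c : ZG) = c • (MonoidAlgebra.of ℤ G g) := by
    simp [MonoidAlgebra.of_apply, Finsupp.smul_single]
  rw [h1, map_zsmul, coeffHom_of, ← Int.cast_smul_eq_zsmul (ZMod q)]
  simp [MonoidAlgebra.of_apply, Finsupp.smul_single]

lemma coeffHom_apply (q : ℕ) (z : ZG) (g : G) :
    (coeffHom q z).coeff g = ((z.coeff g : ℤ) : ZMod q) := by
  induction z using MonoidAlgebra.induction_linear with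
  | zero => simp
  | add x y hx hy =>
    rw [map_add]
    show (coeffHom q x).coeff g + (coeffHom q y).coeff g = _
    rw [hx, hy, MonoidAlgebra.coeff_add, Finsupp.add_apply]
    push_cast
    ring
  | single h c =>
    rw [coeffHom_single]
    by_cases hgh : h = g
    · subst hgh; simp
    · simp [Finsupp.single_apply, hgh]

lemma qcast_eq (q : ℕ) : ((q : ℤ) : ZG) = MonoidAlgebra.single (1 : G) ((q : ℤ)) := by
  rfl

lemma mem_span_q_iff (q : ℕ) (z : ZG) (hq : 0 < q) :
    z ∈ Ideal.span {((q : ℤ) : ZG)} ↔ ∀ g : G, (q : ℤ) ∣ z.coeff g := by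
  rw [Ideal.mem_span_singleton']
  have hc : ((q:ℤ) : ZG) = (q : ℤ) • (1 : ZG) := by simp
  constructor
  · rintro ⟨a, rfl⟩ g
    rw [hc, mul_smul_comm, mul_one]
    rw [MonoidAlgebra.coeff_smul_apply, smul_eq_mul]
    exact dvd_mul_right _ _
  · intro h
    refine ⟨MonoidAlgebra.ofCoeff (z.coeff.mapRange (fun c => c / q) (by simp)), ?_⟩
    rw [hc, mul_smul_comm, mul_one]
    ext g
    rw [MonoidAlgebra.coeff_smul_apply, MonoidAlgebra.coeff_ofCoeff, Finsupp.mapRange_apply,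
      smul_eq_mul]
    exact Int.mul_ediv_cancel' (h g)

lemma ker_coeffHom (q : ℕ) (hq : 0 < q) (z : ZG) :
    coeffHom q z = 0 ↔ z ∈ Ideal.span {((q : ℤ) : ZG)} := by
  rw [mem_span_q_iff q z hq]
  constructor
  · intro h g
    have h2 := congrArg (fun w => w.coeff g) h
    simp only [coeffHom_apply, MonoidAlgebra.coeff_zero, Finsupp.coe_zero, Pi.zero_apply] at h2
    exact (ZMod.intCast_zmod_eq_zero_iff_dvd _ _).mp h2
  · intro h
    ext g
    rw [coeffHom_apply]
    simp only [MonoidAlgebra.coeff_zero, Finsupp.coe_zero, Pi.zero_apply]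
    rw [ZMod.intCast_zmod_eq_zero_iff_dvd]
    exact h g

lemma coeffHom_surjective (q : ℕ) : Function.Surjective (coeffHom q) := by
  intro z
  induction z using MonoidAlgebra.induction_linear with
  | zero => exact ⟨0, map_zero _⟩
  | add x y hx hy =>
    obtain ⟨a, ha⟩ := hx; obtain ⟨b, hb⟩ := hy
    exact ⟨a + b, by rw [map_add, ha, hb]⟩
  | single g c =>
    obtain ⟨c', rfl⟩ := ZMod.intCast_surjective (n := q) c
    exact ⟨MonoidAlgebra.single g c', coeffHom_single q g c'⟩

-- Part 2: Ui component facts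
lemma ui_smul_def (p : ℕ → ℕ) (l : Y) (i : ℕ) (z : ZG) (m : Ui p l i) :
    z • m = (coeffHom (p i) z) • m := rfl

lemma ui_smul_eq_zero_iff (p : ℕ → ℕ) (l : Y) (i : ℕ) (z : ZG) :
    z • ui p l i = 0 ↔
      coeffHom (p i) z ∈ grpIdeal (ZMod (p i)) (subgroupOfV (Hsub l i) : Set G) := by
  rw [ui_smul_def]
  show (coeffHom (p i) z) • (Submodule.Quotient.mk 1 :
    MonoidAlgebra (ZMod (p i)) G ⧸ grpIdeal (ZMod (p i)) (subgroupOfV (Hsub l i) : Set G)) = 0 ↔ _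
  rw [← Submodule.Quotient.mk_smul, smul_eq_mul, mul_one, Submodule.Quotient.mk_eq_zero]

lemma mem_Jl_iff (p : ℕ → ℕ) (l : Y) (z : ZG) :
    z ∈ Jl p l ↔ ∀ i : Idx, z • ui p l i.1 = 0 := by
  rw [Jl, LinearMap.mem_ker, LinearMap.toSpanSingleton_apply]
  constructor
  · intro h i
    have := congrFun h i
    simpa [ul] using this
  · intro h
    funext i
    simpa [ul] using h i

-- Part 3: augV as kernel of the coset-collapse map
def piK (K : AddSubgroup Vsp) : ZG →ₗ[ℤ] ((G ⧸ subgroupOfV K) →₀ ℤ) :=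
  Finsupp.lmapDomain ℤ ℤ (QuotientGroup.mk) ∘ₗ (MonoidAlgebra.coeffLinearEquiv ℤ).toLinearMap

lemma piK_single (K : AddSubgroup Vsp) (g : G) (c : ℤ) :
    piK K (MonoidAlgebra.single g c) = Finsupp.single (QuotientGroup.mk g) c := by
  show Finsupp.mapDomain _ (Finsupp.single g c) = _
  exact Finsupp.mapDomain_single

lemma mem_subgroupOfV (K : AddSubgroup Vsp) (v : Vsp) :
    ofV v ∈ subgroupOfV K ↔ v ∈ K := by
  rw [subgroupOfV, Subgroup.mem_map]
  constructor
  · rintro ⟨m, hm, hme⟩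
    have : m = Multiplicative.ofAdd v := SemidirectProduct.inl_injective hme
    subst this
    exact hm
  · intro hv
    exact ⟨Multiplicative.ofAdd v, hv, rfl⟩

lemma subgroupOfV_rep (K : AddSubgroup Vsp) (g : G) (hg : g ∈ subgroupOfV K) :
    ∃ v ∈ K, g = ofV v := by
  rw [subgroupOfV, Subgroup.mem_map] at hg
  obtain ⟨m, hm, rfl⟩ := hg
  exact ⟨Multiplicative.toAdd m, hm, rfl⟩

lemma piK_single_mul (K : AddSubgroup Vsp) (g : G) (c : ℤ) (y : ZG) :
    piK K ((MonoidAlgebra.single g c : ZG) * y)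
      = c • Finsupp.mapDomain (fun q : G ⧸ subgroupOfV K => g • q) (piK K y) := by
  induction y using MonoidAlgebra.induction_linear with
  | zero => simp
  | add x y hx hy =>
    rw [mul_add, map_add, hx, hy, map_add, Finsupp.mapDomain_add, smul_add]
  | single h d =>
    have h1 : (MonoidAlgebra.single g c : ZG) * MonoidAlgebra.single h d
        = MonoidAlgebra.single (g * h) (c * d) := MonoidAlgebra.single_mul_single ..
    show piK K ((MonoidAlgebra.single g c : ZG) * MonoidAlgebra.single h d) = _
    rw [h1, piK_single, piK_single, Finsupp.mapDomain_single, Finsupp.smul_single,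
      smul_eq_mul]
    rfl

lemma piK_mul_eq_zero (K : AddSubgroup Vsp) (x y : ZG) (hy : piK K y = 0) :
    piK K (x * y) = 0 := by
  induction x using MonoidAlgebra.induction_on with
  | of g =>
    have : MonoidAlgebra.of ℤ G g = (MonoidAlgebra.single g 1 : ZG) := rfl
    rw [this, piK_single_mul, hy]
    simp
  | add a b ha hb => rw [add_mul, map_add, ha, hb, add_zero]
  | smul r x hx => rw [smul_mul_assoc, map_smul, hx, smul_zero]

lemma zOfV_sub_one_mem (K : AddSubgroup Vsp) (v : Vsp) (hv : v ∈ K) :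
    zOfV v - 1 ∈ augV K :=
  Ideal.subset_span ⟨v, hv, rfl⟩

def sK (K : AddSubgroup Vsp) : ZG →ₗ[ℤ] ZG :=
  (MonoidAlgebra.coeffLinearEquiv ℤ).symm.toLinearMap ∘ₗ
    Finsupp.lmapDomain ℤ ℤ (fun g => (QuotientGroup.mk g : G ⧸ subgroupOfV K).out) ∘ₗ
      (MonoidAlgebra.coeffLinearEquiv ℤ).toLinearMap

lemma sK_eq (K : AddSubgroup Vsp) (z : ZG) :
    sK K z = MonoidAlgebra.ofCoeff (Finsupp.mapDomain Quotient.out (piK K z)) := by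
  show MonoidAlgebra.ofCoeff (Finsupp.mapDomain _ z.coeff) = _
  rw [show (fun g => (QuotientGroup.mk g : G ⧸ subgroupOfV K).out)
    = (Quotient.out ∘ (QuotientGroup.mk : G → G ⧸ subgroupOfV K)) from rfl]
  rw [Finsupp.mapDomain_comp]
  rfl

lemma sub_sK_mem (K : AddSubgroup Vsp) (z : ZG) : z - sK K z ∈ augV K := by
  induction z using MonoidAlgebra.induction_on with
  | add x y hx hy =>
    have h : x + y - sK K (x + y) = (x - sK K x) + (y - sK K y) := by
      rw [map_add]; abel
    rw [h]; exact add_mem hx hy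
  | smul r x hx =>
    have h : r • x - sK K (r • x) = r • (x - sK K x) := by
      rw [map_smul, smul_sub]
    rw [h]
    exact Submodule.smul_of_tower_mem _ r hx
  | of g =>
    have hofg : MonoidAlgebra.of ℤ G g = (MonoidAlgebra.single g (1:ℤ) : ZG) := rfl
    rw [hofg]
    set c : ℤ := 1
    have hout : ((QuotientGroup.mk g : G ⧸ subgroupOfV K).out)⁻¹ * g ∈ subgroupOfV K := by
      rw [← QuotientGroup.eq]
      exact QuotientGroup.out_eq' _
    obtain ⟨v, hv, hveq⟩ := subgroupOfV_rep K _ hout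
    set g₀ := (QuotientGroup.mk g : G ⧸ subgroupOfV K).out with hg₀
    have hsk : sK K (MonoidAlgebra.single g c) = MonoidAlgebra.single g₀ c := by
      show MonoidAlgebra.ofCoeff (Finsupp.mapDomain _ (Finsupp.single g c)) = _
      rw [Finsupp.mapDomain_single]; rfl
    have hprod : (MonoidAlgebra.single g₀ c : ZG) * (zOfV v - 1)
        = MonoidAlgebra.single g c - MonoidAlgebra.single g₀ c := by
      rw [mul_sub, mul_one]
      have : (MonoidAlgebra.single g₀ c : ZG) * zOfV v = MonoidAlgebra.single g c := by
        have h2 : zOfV v = (MonoidAlgebra.single (ofV v) 1 : ZG) := rfl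
        rw [h2, MonoidAlgebra.single_mul_single, mul_one, ← hveq, mul_inv_cancel_left]
      rw [this]
    have : (MonoidAlgebra.single g c : ZG) - sK K (MonoidAlgebra.single g c)
        = (MonoidAlgebra.single g₀ c : ZG) * (zOfV v - 1) := by
      rw [hsk, hprod]
    rw [this]
    exact Ideal.mul_mem_left _ _ (zOfV_sub_one_mem K v hv)

lemma mem_augV_iff (K : AddSubgroup Vsp) (z : ZG) :
    z ∈ augV K ↔ piK K z = 0 := by
  constructor
  · intro hz
    refine Submodule.span_induction ?_ ?_ ?_ ?_ hz
    · rintro x ⟨v, hv, rfl⟩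
      have h1 : (zOfV v : ZG) = MonoidAlgebra.single (ofV v) 1 := rfl
      have h2 : (1 : ZG) = MonoidAlgebra.single (1 : G) 1 := rfl
      rw [map_sub, h1, h2, piK_single, piK_single]
      have : (QuotientGroup.mk (ofV v) : G ⧸ subgroupOfV K) = QuotientGroup.mk 1 := by
        rw [QuotientGroup.eq]
        simpa using (mem_subgroupOfV K v).mpr hv
      rw [this, sub_self]
    · simp
    · intro x y _ _ hx hy
      rw [map_add, hx, hy, add_zero]
    · intro r y _ hy
      have : r • y = r * y := rfl
      rw [this]
      exact piK_mul_eq_zero K r y hy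
  · intro hz
    have := sub_sK_mem K z
    rwa [sK_eq, hz, Finsupp.mapDomain_zero, MonoidAlgebra.ofCoeff_zero, sub_zero] at this

-- Part 4: augV monotonicity, sup, and killing lemmas
lemma augV_mono {K K' : AddSubgroup Vsp} (h : K ≤ K') : augV K ≤ augV K' :=
  Ideal.span_mono (Set.image_mono h)

lemma augV_sup_le (H N : AddSubgroup Vsp) : augV (H ⊔ N) ≤ augV H + augV N := by
  rw [augV, Ideal.span_le]
  rintro x ⟨v, hv, rfl⟩
  obtain ⟨h, hh, n, hn, rfl⟩ := AddSubgroup.mem_sup.mp hv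
  have key : zOfV (h + n) - 1 = zOfV h * (zOfV n - 1) + (zOfV h - 1) := by
    rw [zOfV_add, mul_sub, mul_one]; abel
  show zOfV (h + n) - 1 ∈ augV H + augV N
  rw [key]
  exact Submodule.add_mem _
    (Submodule.mem_sup_right (Ideal.mul_mem_left _ _ (zOfV_sub_one_mem N n hn)))
    (Submodule.mem_sup_left (zOfV_sub_one_mem H h hh))

lemma augV_smul_ui_eq_zero (p : ℕ → ℕ) (l : Y) (i : ℕ) (z : ZG)
    (hz : z ∈ augV (Hsub l i)) : z • ui p l i = 0 := by
  rw [ui_smul_eq_zero_iff]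
  refine Submodule.span_induction ?_ ?_ ?_ ?_ hz
  · rintro x ⟨v, hv, rfl⟩
    rw [map_sub, map_one]
    have : coeffHom (p i) (zOfV v) = MonoidAlgebra.of (ZMod (p i)) G (ofV v) :=
      coeffHom_of _ _
    rw [this]
    exact Ideal.subset_span ⟨ofV v, (mem_subgroupOfV (Hsub l i) v).mpr hv, rfl⟩
  · simp
  · intro x y _ _ hx hy
    rw [map_add]; exact Submodule.add_mem _ hx hy
  · intro r y _ hy
    have : r • y = r * y := rfl
    rw [this, map_mul]
    exact Ideal.mul_mem_left _ _ hy

lemma pmul_smul_ui_eq_zero (p : ℕ → ℕ) (l : Y) (i : ℕ) (hpi : 0 < p i) (z : ZG)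
    (hz : z ∈ Ideal.span {((p i : ℤ) : ZG)}) : z • ui p l i = 0 := by
  rw [ui_smul_eq_zero_iff]
  have : coeffHom (p i) z = 0 := (ker_coeffHom (p i) hpi z).mpr hz
  rw [this]
  exact Submodule.zero_mem _

-- per-component annihilator
def AnnU (p : ℕ → ℕ) (l : Y) (i : ℕ) : Ideal ZG :=
  LinearMap.ker (LinearMap.toSpanSingleton ZG (Ui p l i) (ui p l i))

lemma mem_AnnU (p : ℕ → ℕ) (l : Y) (i : ℕ) (z : ZG) :
    z ∈ AnnU p l i ↔ z • ui p l i = 0 := Iff.rfl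

lemma Jl_eq_iInf (p : ℕ → ℕ) (l : Y) (z : ZG) :
    z ∈ Jl p l ↔ ∀ i : ℕ, 1 ≤ i → z ∈ AnnU p l i := by
  rw [mem_Jl_iff]
  exact ⟨fun h i hi => h ⟨i, hi⟩, fun h i => h i.1 i.2⟩

-- Part 5: Lemma P (purity of augmentation kernels)
lemma subgroupOfV_mono {K K' : AddSubgroup Vsp} (h : K ≤ K') :
    subgroupOfV K ≤ subgroupOfV K' :=
  Subgroup.map_mono (fun _ hx => h hx)

def collapse {K K' : AddSubgroup Vsp} (h : K ≤ K') :
    G ⧸ subgroupOfV K → G ⧸ subgroupOfV K' :=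
  Quotient.map' id (fun a b hab => QuotientGroup.leftRel_apply.mpr
    (subgroupOfV_mono h (QuotientGroup.leftRel_apply.mp hab)))

lemma collapse_mk {K K' : AddSubgroup Vsp} (h : K ≤ K') (g : G) :
    collapse h (QuotientGroup.mk g) = QuotientGroup.mk g := rfl

lemma collapse_comp_piK {K K' : AddSubgroup Vsp} (h : K ≤ K') (z : ZG) :
    Finsupp.mapDomain (collapse h) (piK K z) = piK K' z := by
  show Finsupp.mapDomain (collapse h) (Finsupp.mapDomain QuotientGroup.mk z.coeff) = _
  rw [← Finsupp.mapDomain_comp]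
  rfl

lemma mapDomain_ker_span {X W : Type} (fm : X → W) (ξ : X →₀ ℤ)
    (h : Finsupp.mapDomain fm ξ = 0) :
    ξ ∈ Submodule.span ℤ {d : X →₀ ℤ |
      ∃ x x', fm x = fm x' ∧ d = Finsupp.single x 1 - Finsupp.single x' 1} := by
  classical
  generalize hn : ξ.support.card = n
  induction n using Nat.strong_induction_on generalizing ξ with
  | _ n ih =>
  by_cases h0 : ξ = 0
  · subst h0; exact Submodule.zero_mem _
  · obtain ⟨x₀, hx₀⟩ := Finsupp.support_nonempty_iff.mpr h0
    -- evaluate mapDomain at fm x₀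
    have happ : ∀ w : W, (Finsupp.mapDomain fm ξ) w
        = ξ.sum fun x c => if fm x = w then c else 0 := by
      intro w
      rw [Finsupp.mapDomain, Finsupp.sum_apply]
      congr 1
      ext x c
      rw [Finsupp.single_apply]
    have hsum : (ξ.sum fun x c => if fm x = fm x₀ then c else 0) = 0 := by
      rw [← happ, h]; rfl
    have hex : ∃ x₁ ∈ ξ.support, x₁ ≠ x₀ ∧ fm x₁ = fm x₀ := by
      by_contra hcon
      push_neg at hcon
      have : (ξ.sum fun x c => if fm x = fm x₀ then c else 0) = ξ x₀ := by
        rw [Finsupp.sum]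
        rw [Finset.sum_eq_single x₀]
        · simp
        · intro b hb hbne
          by_cases hfb : fm b = fm x₀
          · exact absurd hfb (hcon b hb hbne)
          · simp [hfb]
        · intro hnot
          exact absurd (Finsupp.mem_support_iff.mp hx₀) (by
            simpa using Finsupp.notMem_support_iff.mp hnot)
      rw [this] at hsum
      exact Finsupp.mem_support_iff.mp hx₀ hsum
    obtain ⟨x₁, hx₁s, hx₁ne, hfx₁⟩ := hex
    set dgen : X →₀ ℤ := Finsupp.single x₁ 1 - Finsupp.single x₀ 1 with hdgen
    have hdmem : dgen ∈ {d : X →₀ ℤ |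
        ∃ x x', fm x = fm x' ∧ d = Finsupp.single x 1 - Finsupp.single x' 1} :=
      ⟨x₁, x₀, hfx₁, rfl⟩
    set ξ' : X →₀ ℤ := ξ - (ξ x₁) • dgen with hξ'
    have hξ'x₁ : ξ' x₁ = 0 := by
      rw [hξ', Finsupp.sub_apply, Finsupp.smul_apply, hdgen, Finsupp.sub_apply,
        Finsupp.single_eq_same, Finsupp.single_eq_of_ne' (Ne.symm hx₁ne), smul_eq_mul]
      ring
    have hξ'x : ∀ x, x ≠ x₁ → x ≠ x₀ → ξ' x = ξ x := by
      intro x hxne hxne0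
      simp [hξ', hdgen, Finsupp.single_apply, Ne.symm hxne, Ne.symm hxne0]
    have hξ'x₀ : ξ' x₀ = ξ x₀ + ξ x₁ := by
      rw [hξ', Finsupp.sub_apply, Finsupp.smul_apply, hdgen, Finsupp.sub_apply,
        Finsupp.single_eq_of_ne' hx₁ne, Finsupp.single_eq_same, smul_eq_mul]
      ring
    have hsupp : ξ'.support ⊆ ξ.support \ {x₁} := by
      intro x hx
      rw [Finsupp.mem_support_iff] at hx
      rcases eq_or_ne x x₁ with rfl | hne1
      · exact absurd hξ'x₁ hx
      rcases eq_or_ne x x₀ with rfl | hne0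
      · exact Finset.mem_sdiff.mpr ⟨hx₀, by simpa using hx₁ne.symm⟩
      · rw [hξ'x x hne1 hne0] at hx
        exact Finset.mem_sdiff.mpr ⟨Finsupp.mem_support_iff.mpr hx, by simpa using hne1⟩
    have hcard : ξ'.support.card < n := by
      rw [← hn]
      calc ξ'.support.card ≤ (ξ.support \ {x₁}).card := Finset.card_le_card hsupp
        _ < ξ.support.card := by
          apply Finset.card_lt_card
          rw [Finset.ssubset_iff_of_subset (Finset.sdiff_subset)]
          exact ⟨x₁, hx₁s, by simp⟩
    have hmd : Finsupp.mapDomain fm ξ' = 0 := by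
      show Finsupp.lmapDomain ℤ ℤ fm ξ' = 0
      have hdz : Finsupp.lmapDomain ℤ ℤ fm dgen = 0 := by
        rw [hdgen, map_sub]
        have e1 : Finsupp.lmapDomain ℤ ℤ fm (Finsupp.single x₁ (1:ℤ))
            = Finsupp.single (fm x₁) 1 := Finsupp.mapDomain_single
        have e2 : Finsupp.lmapDomain ℤ ℤ fm (Finsupp.single x₀ (1:ℤ))
            = Finsupp.single (fm x₀) 1 := Finsupp.mapDomain_single
        rw [e1, e2, hfx₁, sub_self]
      have hz1 : Finsupp.lmapDomain ℤ ℤ fm ξ = 0 := h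
      rw [hξ', map_sub, map_smul, hz1, hdz, smul_zero, sub_zero]
    have hih := ih _ hcard ξ' hmd rfl
    have : ξ = ξ' + (ξ x₁) • dgen := by rw [hξ']; abel
    rw [this]
    exact Submodule.add_mem _ hih
      (Submodule.smul_mem _ _ (Submodule.subset_span hdmem))

lemma lemmaP {Ks Kb : AddSubgroup Vsp} (hK : Ks ≤ Kb) (q : ℤ) (hq : q ≠ 0) (z : ZG)
    (hzB : z ∈ augV Kb) (hz : z ∈ Ideal.span {(q : ZG)} + augV Ks) :
    ∃ y ∈ augV Ks, ∃ u ∈ augV Kb, z = y + q • u := by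
  obtain ⟨s, hs, y₀, hy₀, rfl⟩ := Submodule.mem_sup.mp hz
  obtain ⟨a, ha⟩ := Ideal.mem_span_singleton'.mp hs
  have hsa : s = q • a := by
    rw [← ha]
    have h1 : (q : ZG) = q • (1 : ZG) := by simp
    rw [h1, mul_smul_comm, mul_one]
  have hbz : piK Kb (s + y₀) = 0 := (mem_augV_iff Kb _).mp hzB
  have hby₀ : piK Kb y₀ = 0 := (mem_augV_iff Kb _).mp (augV_mono hK hy₀)
  have hba : q • piK Kb a = 0 := by
    have h2 : piK Kb s = q • piK Kb a := by rw [hsa, map_smul]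
    rw [map_add, hby₀, add_zero, h2] at hbz
    exact hbz
  have hba0 : piK Kb a = 0 := by
    ext w
    have h3 := congrArg (fun ν => ν w) hba
    simp only [Finsupp.smul_apply, smul_eq_mul, Finsupp.coe_zero, Pi.zero_apply] at h3 ⊢
    exact (mul_eq_zero.mp h3).resolve_left hq
  set ξ := piK Ks a with hξdef
  have hcoll : Finsupp.mapDomain (collapse hK) ξ = 0 := by
    rw [hξdef, collapse_comp_piK hK a, hba0]
  have hspan := mapDomain_ker_span (collapse hK) ξ hcoll
  set Sv : Submodule ℤ ((G ⧸ subgroupOfV Ks) →₀ ℤ) :=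
    Submodule.map (piK Ks) ((augV Kb).restrictScalars ℤ) with hSv
  have hgen : {d : (G ⧸ subgroupOfV Ks) →₀ ℤ |
      ∃ x x', collapse hK x = collapse hK x' ∧
        d = Finsupp.single x 1 - Finsupp.single x' 1} ⊆ (Sv : Set _) := by
    rintro d ⟨x, x', hxx', rfl⟩
    set u₀ : ZG := MonoidAlgebra.single x.out 1 - MonoidAlgebra.single x'.out 1 with hu₀
    have hmkb : (QuotientGroup.mk x.out : G ⧸ subgroupOfV Kb)
        = QuotientGroup.mk x'.out := by
      have e1 : collapse hK (QuotientGroup.mk x.out) = QuotientGroup.mk x.out :=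
        collapse_mk hK _
      have e2 : collapse hK (QuotientGroup.mk x'.out) = QuotientGroup.mk x'.out :=
        collapse_mk hK _
      rw [← e1, ← e2, QuotientGroup.out_eq', QuotientGroup.out_eq', hxx']
    have hu₀b : u₀ ∈ augV Kb := by
      rw [mem_augV_iff, hu₀, map_sub, piK_single, piK_single, hmkb, sub_self]
    have hu₀s : piK Ks u₀ = Finsupp.single x 1 - Finsupp.single x' 1 := by
      rw [hu₀, map_sub, piK_single, piK_single, QuotientGroup.out_eq',
        QuotientGroup.out_eq']
    exact ⟨u₀, hu₀b, hu₀s⟩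
  have hξmem : ξ ∈ Sv := (Submodule.span_le.mpr hgen) hspan
  obtain ⟨u, hu, hup⟩ := hξmem
  refine ⟨y₀ + q • (a - u), ?_, u, hu, ?_⟩
  · rw [mem_augV_iff, map_add, map_smul, map_sub]
    rw [(mem_augV_iff Ks y₀).mp hy₀]
    rw [show piK Ks u = ξ from hup, hξdef]
    simp
  · rw [hsa, smul_sub]
    abel

-- Part 6: the subgroup N of trivially-acting elements of V
section Nsection

variable (F : Type) [AddCommGroup F] [Module ZG F]

def Nsub : AddSubgroup Vsp where
  carrier := {v | ∀ x : F, zOfV v • x = x}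
  zero_mem' := by
    intro x
    rw [zOfV_zero, one_smul]
  add_mem' := by
    intro v w hv hw x
    rw [zOfV_add, mul_smul, hw x, hv x]
  neg_mem' := by
    intro v hv x
    conv_lhs => rw [← hv x]
    rw [smul_smul, ← zOfV_add, neg_add_cancel, zOfV_zero, one_smul]

lemma mem_Nsub (v : Vsp) : v ∈ Nsub F ↔ ∀ x : F, zOfV v • x = x := Iff.rfl

lemma Nsub_inv (c : MulAut (Multiplicative Vsp)) (hc : c ∈ Asub) (v : Vsp)
    (hv : v ∈ Nsub F) : Multiplicative.toAdd (c (Multiplicative.ofAdd v)) ∈ Nsub F := by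
  intro x
  set c' : ↥Asub := ⟨c, hc⟩ with hc'
  have key : ofV (Multiplicative.toAdd (c (Multiplicative.ofAdd v)))
      = SemidirectProduct.inr c' * ofV v * (SemidirectProduct.inr c')⁻¹ := by
    rw [ofV]
    have : Multiplicative.ofAdd (Multiplicative.toAdd (c (Multiplicative.ofAdd v)))
        = c (Multiplicative.ofAdd v) := rfl
    rw [this]
    have : c (Multiplicative.ofAdd v) = (Asub.subtype c') (Multiplicative.ofAdd v) := rfl
    rw [this, SemidirectProduct.inl_aut, ofV, map_inv]
  show zOfV _ • x = x
  rw [zOfV, key, map_mul, map_mul, mul_smul, mul_smul]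
  have h1 : (MonoidAlgebra.of ℤ G (ofV v)) •
        ((MonoidAlgebra.of ℤ G ((SemidirectProduct.inr c')⁻¹)) • x)
      = (MonoidAlgebra.of ℤ G ((SemidirectProduct.inr c')⁻¹)) • x := hv _
  rw [h1, smul_smul, ← map_mul, mul_inv_cancel, map_one, one_smul]

end Nsection


-- Part 7: permutation automorphisms as a homomorphism
lemma permAut_apply (σ : Equiv.Perm (ℤ × Bool)) (v : Vsp) :
    permAut σ (Multiplicative.ofAdd v)
      = Multiplicative.ofAdd (Finsupp.equivMapDomain σ v) := rfl

lemma permAut_mul (σ τ : Equiv.Perm (ℤ × Bool)) :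
    permAut (σ * τ) = permAut σ * permAut τ := by
  ext x : 1
  show permAut (σ * τ) (Multiplicative.ofAdd (Multiplicative.toAdd x)) = _
  rw [permAut_apply]
  show _ = permAut σ (permAut τ (Multiplicative.ofAdd (Multiplicative.toAdd x)))
  rw [permAut_apply, permAut_apply]
  congr 1
  rw [show σ * τ = Equiv.trans τ σ from rfl, Finsupp.equivMapDomain_trans]

def Ahom : Equiv.Perm (ℤ × Bool) →* MulAut (Multiplicative Vsp) :=
  MonoidHom.mk' permAut permAut_mul

lemma Ahom_tPerm : Ahom tPerm = tAut := rfl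
lemma Ahom_aPerm : Ahom aPerm = aAut := rfl

lemma tpow_apply (n : ℕ) (x : ℤ × Bool) : (tPerm ^ n) x = (x.1 + n, x.2) := by
  induction n with
  | zero => simp
  | succ n ih =>
    rw [pow_succ']
    show tPerm ((tPerm ^ n) x) = _
    rw [ih]
    show ((x.1 + n) + 1, x.2) = _
    congr 1
    push_cast
    ring

def swn (n : ℕ) : Equiv.Perm (ℤ × Bool) := Equiv.swap ((n:ℤ), false) ((n:ℤ), true)

lemma swn_conj (n : ℕ) : swn n = tPerm ^ n * aPerm * (tPerm ^ n)⁻¹ := by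
  have h := Equiv.swap_apply_apply (tPerm ^ n) ((0:ℤ), false) ((0:ℤ), true)
  rw [tpow_apply, tpow_apply] at h
  simp only [zero_add] at h
  exact h

lemma swnAut_mem (n : ℕ) : permAut (swn n) ∈ Asub := by
  have : permAut (swn n) = Ahom (swn n) := rfl
  rw [this, swn_conj, map_mul, map_mul, map_inv, map_pow, Ahom_tPerm, Ahom_aPerm]
  have ht : tAut ∈ Asub := Subgroup.subset_closure (by simp [Asub])
  have ha : aAut ∈ Asub := Subgroup.subset_closure (by simp [Asub])
  exact mul_mem (mul_mem (pow_mem ht n) ha) (inv_mem (pow_mem ht n))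

lemma tpowAut_mem (n : ℕ) : permAut (tPerm ^ n) ∈ Asub := by
  have : permAut (tPerm ^ n) = Ahom (tPerm ^ n) := rfl
  rw [this, map_pow, Ahom_tPerm]
  exact pow_mem (Subgroup.subset_closure (by simp [Asub])) n

lemma tpowinvAut_mem (n : ℕ) : permAut ((tPerm ^ n)⁻¹) ∈ Asub := by
  have : permAut ((tPerm ^ n)⁻¹) = Ahom ((tPerm ^ n)⁻¹) := rfl
  rw [this, map_inv, map_pow, Ahom_tPerm]
  exact inv_mem (pow_mem (Subgroup.subset_closure (by simp [Asub])) n)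

-- Part 8: periodicity modulo N and e - f ∈ N
section Nfin

variable (F : Type) [AddCommGroup F] [Module ZG F] [Finite F]

def jq : Vsp ⧸ Nsub F → (F → F) := fun q =>
  Quotient.liftOn' q (fun v => fun x : F => zOfV v • x) (fun a b hab => by
    have hab' : -a + b ∈ Nsub F := QuotientAddGroup.leftRel_apply.mp hab
    funext x
    show zOfV a • x = zOfV b • x
    conv_rhs => rw [show b = a + (-a + b) by abel]
    rw [zOfV_add, mul_smul, hab' x])

lemma Nsub_quot_finite : Finite (Vsp ⧸ Nsub F) := by
  have hinj : Function.Injective (jq F) := by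
    intro q q'
    induction q using Quotient.inductionOn' with | h a =>
    induction q' using Quotient.inductionOn' with | h b =>
    intro hab
    simp only [jq, Quotient.liftOn'_mk''] at hab
    have hN : -a + b ∈ Nsub F := by
      intro x
      have hx := congrFun hab x
      rw [zOfV_add, mul_smul]
      have hbx : zOfV b • x = zOfV a • x := hx.symm ▸ rfl
      rw [hbx, smul_smul, ← zOfV_add, neg_add_cancel, zOfV_zero, one_smul]
    exact Quotient.sound' (QuotientAddGroup.leftRel_apply.mpr hN)
  exact Finite.of_injective _ hinj

def Taddf : Vsp → Vsp := fun v => Finsupp.equivMapDomain tPerm v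

lemma N_perm_invariant (σ : Equiv.Perm (ℤ × Bool)) (hσ : permAut σ ∈ Asub) (v : Vsp)
    (hv : v ∈ Nsub F) : Finsupp.equivMapDomain σ v ∈ Nsub F := by
  have := Nsub_inv F (permAut σ) hσ v hv
  exact this

def tauPerm : Equiv.Perm (Vsp ⧸ Nsub F) where
  toFun := Quotient.map' Taddf (by
    intro a b hab
    apply QuotientAddGroup.leftRel_apply.mpr
    have hab' : -a + b ∈ Nsub F := QuotientAddGroup.leftRel_apply.mp hab
    have h1 : Finsupp.equivMapDomain tPerm (-a + b) ∈ Nsub F :=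
      N_perm_invariant F tPerm (by
        have : permAut tPerm = tAut := rfl
        rw [this]; exact Subgroup.subset_closure (by simp [Asub])) _ hab'
    have h2 : Finsupp.equivMapDomain tPerm (-a + b) = -(Taddf a) + Taddf b := by
      show (Finsupp.domCongr tPerm : Vsp ≃+ Vsp) (-a + b) = _
      rw [map_add, map_neg]
      rfl
    rwa [h2] at h1)
  invFun := Quotient.map' (fun v => Finsupp.equivMapDomain tPerm⁻¹ v) (by
    intro a b hab
    apply QuotientAddGroup.leftRel_apply.mpr
    have hab' : -a + b ∈ Nsub F := QuotientAddGroup.leftRel_apply.mp hab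
    have h1 : Finsupp.equivMapDomain tPerm⁻¹ (-a + b) ∈ Nsub F :=
      N_perm_invariant F tPerm⁻¹ (by
        have : permAut tPerm⁻¹ = Ahom tPerm⁻¹ := rfl
        rw [this, map_inv, Ahom_tPerm]
        exact inv_mem (Subgroup.subset_closure (by simp [Asub]))) _ hab'
    have h2 : Finsupp.equivMapDomain tPerm⁻¹ (-a + b)
        = -(Finsupp.equivMapDomain tPerm⁻¹ a) + Finsupp.equivMapDomain tPerm⁻¹ b := by
      show (Finsupp.domCongr tPerm⁻¹ : Vsp ≃+ Vsp) (-a + b) = _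
      rw [map_add, map_neg]
      rfl
    rwa [h2] at h1)
  left_inv := by
    intro q
    induction q using Quotient.inductionOn' with | h a =>
    rw [Quotient.map'_mk'', Quotient.map'_mk'']
    congr 1
    show Finsupp.equivMapDomain tPerm⁻¹ (Finsupp.equivMapDomain tPerm a) = a
    rw [← Finsupp.equivMapDomain_trans]
    have he : tPerm.trans tPerm⁻¹ = Equiv.refl _ := by ext x <;> simp
    rw [he]
    exact Finsupp.equivMapDomain_refl a
  right_inv := by
    intro q
    induction q using Quotient.inductionOn' with | h a =>
    rw [Quotient.map'_mk'', Quotient.map'_mk'']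
    congr 1
    show Finsupp.equivMapDomain tPerm (Finsupp.equivMapDomain tPerm⁻¹ a) = a
    rw [← Finsupp.equivMapDomain_trans]
    have he : (tPerm⁻¹ : Equiv.Perm (ℤ × Bool)).trans tPerm = Equiv.refl _ := by ext x <;> simp
    rw [he]
    exact Finsupp.equivMapDomain_refl a

lemma tauPerm_mk (w : Vsp) :
    tauPerm F (QuotientAddGroup.mk w) = QuotientAddGroup.mk (Taddf w) := rfl

lemma tauPerm_pow_mk (n : ℕ) (v : Vsp) :
    (tauPerm F ^ n) (QuotientAddGroup.mk v) = QuotientAddGroup.mk (Taddf^[n] v) := by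
  induction n with
  | zero => simp
  | succ n ih =>
    rw [pow_succ']
    show tauPerm F ((tauPerm F ^ n) (QuotientAddGroup.mk v)) = _
    rw [ih, tauPerm_mk]
    congr 1
    exact (Function.iterate_succ_apply' Taddf n v).symm

lemma exists_period : ∃ d : ℕ, 1 ≤ d ∧ ∀ v : Vsp, Taddf^[d] v - v ∈ Nsub F := by
  have : Finite (Vsp ⧸ Nsub F) := Nsub_quot_finite F
  refine ⟨orderOf (tauPerm F), ?_, ?_⟩
  · exact orderOf_pos (tauPerm F)
  · intro v
    have hpow : tauPerm F ^ orderOf (tauPerm F) = 1 := pow_orderOf_eq_one _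
    have h1 : (tauPerm F ^ orderOf (tauPerm F)) (QuotientAddGroup.mk v)
        = QuotientAddGroup.mk v := by rw [hpow]; rfl
    rw [tauPerm_pow_mk] at h1
    have h2 : -(Taddf^[orderOf (tauPerm F)] v) + v ∈ Nsub F :=
      QuotientAddGroup.leftRel_apply.mp (Quotient.exact' h1)
    have h3 := (Nsub F).neg_mem h2
    have h4 : -(-(Taddf^[orderOf (tauPerm F)] v) + v)
        = Taddf^[orderOf (tauPerm F)] v - v := by abel
    rwa [h4] at h3

lemma Taddf_iter_single (n : ℕ) (i : ℤ) (b : Bool) (c : ZMod 2) :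
    Taddf^[n] (Finsupp.single (i, b) c) = Finsupp.single (i + n, b) c := by
  induction n with
  | zero => simp
  | succ n ih =>
    rw [Function.iterate_succ_apply', ih]
    show Finsupp.equivMapDomain tPerm _ = _
    rw [Finsupp.equivMapDomain_single]
    have : tPerm (i + n, b) = (i + n + 1, b) := rfl
    rw [this]
    congr 2
    push_cast
    ring

lemma ef_mem_Nsub (n : ℕ) : e (n : ℤ) - f (n : ℤ) ∈ Nsub F := by
  obtain ⟨d, hd1, hper⟩ := exists_period F
  -- step 1 : e (n+d) - e n ∈ N
  have h1 : e ((n : ℤ) + d) - e (n : ℤ) ∈ Nsub F := by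
    have := hper (e (n : ℤ))
    rwa [show Taddf^[d] (e (n:ℤ)) = e ((n:ℤ) + d) from Taddf_iter_single d n false 1] at this
  -- step 2 : apply the swap at position n+d
  have hnd : ((n : ℤ) + d) = ((n + d : ℕ) : ℤ) := by push_cast; ring
  have hne1 : ((n:ℤ), false) ≠ (((n:ℤ) + d), false) := by
    intro hcon
    have := congrArg Prod.fst hcon
    simp at this
    omega
  have hne2 : ((n:ℤ), false) ≠ (((n:ℤ) + d), true) := by
    intro hcon
    have := congrArg Prod.snd hcon
    simp at this
  have h2 : Finsupp.equivMapDomain (swn (n + d)) (e ((n:ℤ) + d) - e (n:ℤ))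
      ∈ Nsub F := by
    apply N_perm_invariant F _ (swnAut_mem (n + d)) _ h1
  have h3 : Finsupp.equivMapDomain (swn (n + d)) (e ((n:ℤ) + d) - e (n:ℤ))
      = f ((n:ℤ) + d) - e (n:ℤ) := by
    have hlin : Finsupp.equivMapDomain (swn (n + d)) (e ((n:ℤ) + d) - e (n:ℤ))
        = Finsupp.equivMapDomain (swn (n + d)) (e ((n:ℤ) + d))
          - Finsupp.equivMapDomain (swn (n + d)) (e (n:ℤ)) := by
      show (Finsupp.domCongr (swn (n+d)) : Vsp ≃+ Vsp) _ = _
      rw [map_sub]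
      rfl
    rw [hlin]
    rw [e, e, f, Finsupp.equivMapDomain_single, Finsupp.equivMapDomain_single]
    congr 2
    · show (swn (n+d)) (((n:ℤ) + d), false) = (((n:ℤ) + d), true)
      rw [swn, ← hnd]
      exact Equiv.swap_apply_left _ _
    · show (swn (n+d)) ((n:ℤ), false) = ((n:ℤ), false)
      rw [swn, ← hnd]
      exact Equiv.swap_apply_of_ne_of_ne hne1 hne2
  rw [h3] at h2
  -- step 3 : subtract
  have h4 : e ((n:ℤ) + d) - f ((n:ℤ) + d) ∈ Nsub F := by
    have := (Nsub F).sub_mem h1 h2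
    have heq : (e ((n:ℤ) + d) - e (n:ℤ)) - (f ((n:ℤ) + d) - e (n:ℤ))
        = e ((n:ℤ) + d) - f ((n:ℤ) + d) := by abel
    rwa [heq] at this
  -- step 4 : shift back down by d
  have h5 : Finsupp.equivMapDomain ((tPerm ^ d)⁻¹) (e ((n:ℤ) + d) - f ((n:ℤ) + d))
      ∈ Nsub F := N_perm_invariant F _ (tpowinvAut_mem d) _ h4
  have h6 : Finsupp.equivMapDomain ((tPerm ^ d)⁻¹) (e ((n:ℤ) + d) - f ((n:ℤ) + d))
      = e (n:ℤ) - f (n:ℤ) := by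
    have hlin : Finsupp.equivMapDomain ((tPerm ^ d)⁻¹) (e ((n:ℤ) + d) - f ((n:ℤ) + d))
        = Finsupp.equivMapDomain ((tPerm ^ d)⁻¹) (e ((n:ℤ) + d))
          - Finsupp.equivMapDomain ((tPerm ^ d)⁻¹) (f ((n:ℤ) + d)) := by
      show (Finsupp.domCongr ((tPerm ^ d)⁻¹) : Vsp ≃+ Vsp) _ = _
      rw [map_sub]
      rfl
    have hb : ∀ b : Bool, ((tPerm ^ d)⁻¹) (((n:ℤ) + d), b) = ((n:ℤ), b) := by
      intro b
      have h7 : (tPerm ^ d) ((n:ℤ), b) = (((n:ℤ) + d), b) := tpow_apply d _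
      rw [← h7]
      exact Equiv.symm_apply_apply _ _
    rw [hlin, e, f, Finsupp.equivMapDomain_single, Finsupp.equivMapDomain_single, hb, hb]
    rfl
  rw [h6] at h5
  exact h5

-- Part 9: Hsub chain facts and per-component membership
lemma Hsub_mono (l : Y) {i j : ℕ} (h : i ≤ j) : Hsub l i ≤ Hsub l j := by
  apply AddSubgroup.closure_mono
  apply Set.union_subset_union
  apply Set.union_subset_union
  · exact Set.image_mono (Set.Icc_subset_Icc_right h)
  · exact Set.image_mono (Set.Icc_subset_Icc_right h)
  · exact Set.image_mono (Set.Icc_subset_Icc_right h)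

lemma cseq_cases (l : Y) (m : ℕ) :
    cseq l m = e (((m + 1) / 2 : ℕ) : ℤ) ∨ cseq l m = f (((m + 1) / 2 : ℕ) : ℤ) := by
  rw [cseq]
  split
  · left; rfl
  · right; rfl

lemma component_mem (p : ℕ → ℕ) (l : Y) (i : ℕ) (hpi : 0 < p i) (z : ZG)
    (hz : z • ui p l i = 0) :
    z ∈ Ideal.span {((p i : ℤ) : ZG)} + augV (Hsub l i) := by
  rw [ui_smul_eq_zero_iff] at hz
  have hmap : grpIdeal (ZMod (p i)) (subgroupOfV (Hsub l i) : Set G)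
      ≤ Ideal.map (coeffHom (p i)) (augV (Hsub l i)) := by
    rw [grpIdeal, Ideal.span_le]
    rintro x ⟨g, hg, rfl⟩
    obtain ⟨v, hv, rfl⟩ := subgroupOfV_rep _ g hg
    have hcv : MonoidAlgebra.of (ZMod (p i)) G (ofV v) - 1 = coeffHom (p i) (zOfV v - 1) := by
      rw [map_sub, map_one, zOfV, coeffHom_of]
    show MonoidAlgebra.of (ZMod (p i)) G (ofV v) - 1 ∈ _
    rw [hcv]
    exact Ideal.mem_map_of_mem _ (zOfV_sub_one_mem _ v hv)
  obtain ⟨w, hw, hwz⟩ :=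
    (Ideal.mem_map_iff_of_surjective _ (coeffHom_surjective (p i))).mp (hmap hz)
  have hker : coeffHom (p i) (z - w) = 0 := by rw [map_sub, hwz, sub_self]
  have hkz : z - w ∈ Ideal.span {((p i : ℤ) : ZG)} := (ker_coeffHom (p i) hpi _).mp hker
  have hzw : z = (z - w) + w := by abel
  rw [hzw]
  exact Submodule.add_mem _ (Submodule.mem_sup_left hkz) (Submodule.mem_sup_right hw)

-- exponent p on Ui
lemma p_zsmul_ui (p : ℕ → ℕ) (l : Y) (i : ℕ) (x : Ui p l i) : (p i : ℤ) • x = 0 := by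
  have h1 : ((p i : ℤ) : MonoidAlgebra (ZMod (p i)) G) • x = (p i : ℤ) • x :=
    Int.cast_smul_eq_zsmul _ _ _
  rw [← h1]
  have h2 : ((p i : ℤ) : MonoidAlgebra (ZMod (p i)) G) = 0 := by
    rw [Int.cast_natCast, MonoidAlgebra.natCast_def]
    simp
  rw [h2, zero_smul]

-- Part 10: the K-chain, stabilization, and step A
section Main

variable (F : Type) [AddCommGroup F] [Module ZG F] [Finite F]

def Ksub (α : Y) (i : ℕ) : AddSubgroup Vsp := Hsub α i ⊔ Nsub F

lemma Ksub_mono (α : Y) {i j : ℕ} (h : i ≤ j) : Ksub F α i ≤ Ksub F α j :=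
  sup_le_sup_right (Hsub_mono α h) _

lemma Nsub_le_Ksub (α : Y) (i : ℕ) : Nsub F ≤ Ksub F α i := le_sup_right

lemma Hsub_le_Ksub_other (α β : Y) (i : ℕ) : Hsub β i ≤ Ksub F α i := by
  rw [Hsub, AddSubgroup.closure_le]
  intro v hv
  rcases hv with (h | h) | h
  · obtain ⟨j, hj, rfl⟩ := h
    exact le_sup_left (a := Hsub α i) (b := Nsub F)
      (AddSubgroup.subset_closure (Or.inl (Or.inl ⟨j, hj, rfl⟩)))
  · obtain ⟨j, hj, rfl⟩ := h
    exact le_sup_left (a := Hsub α i) (b := Nsub F)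
      (AddSubgroup.subset_closure (Or.inl (Or.inr ⟨j, hj, rfl⟩)))
  · obtain ⟨m, hm, rfl⟩ := h
    have hα : cseq α m ∈ Ksub F α i :=
      le_sup_left (a := Hsub α i) (b := Nsub F)
        (AddSubgroup.subset_closure (Or.inr ⟨m, hm, rfl⟩))
    have hef : e (((m + 1) / 2 : ℕ) : ℤ) - f (((m + 1) / 2 : ℕ) : ℤ) ∈ Ksub F α i :=
      Nsub_le_Ksub F α i (ef_mem_Nsub F ((m + 1) / 2))
    have he : e (((m + 1) / 2 : ℕ) : ℤ) ∈ Ksub F α i ∧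
        f (((m + 1) / 2 : ℕ) : ℤ) ∈ Ksub F α i := by
      rcases cseq_cases α m with hc | hc
      · rw [hc] at hα
        refine ⟨hα, ?_⟩
        have := (Ksub F α i).sub_mem hα hef
        have heq : e (((m + 1) / 2 : ℕ) : ℤ) -
            (e (((m + 1) / 2 : ℕ) : ℤ) - f (((m + 1) / 2 : ℕ) : ℤ))
            = f (((m + 1) / 2 : ℕ) : ℤ) := by abel
        rwa [heq] at this
      · rw [hc] at hα
        refine ⟨?_, hα⟩
        have := (Ksub F α i).add_mem hα hef
        have heq : f (((m + 1) / 2 : ℕ) : ℤ) +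
            (e (((m + 1) / 2 : ℕ) : ℤ) - f (((m + 1) / 2 : ℕ) : ℤ))
            = e (((m + 1) / 2 : ℕ) : ℤ) := by abel
        rwa [heq] at this
    rcases cseq_cases β m with hc | hc
    · rw [hc]; exact he.1
    · rw [hc]; exact he.2

lemma Ksub_stab (α : Y) : ∃ i₀ : ℕ, 1 ≤ i₀ ∧ ∀ i, i₀ ≤ i → Ksub F α i = Ksub F α i₀ := by
  classical
  have hfin : Finite (Vsp ⧸ Nsub F) := Nsub_quot_finite F
  have hft : Fintype (Vsp ⧸ Nsub F) := Fintype.ofFinite _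
  set mkq := QuotientAddGroup.mk' (Nsub F) with hmkq
  set Q : ℕ → AddSubgroup (Vsp ⧸ Nsub F) := fun i => AddSubgroup.map mkq (Ksub F α i)
    with hQ
  have hQmono : ∀ i j, i ≤ j → Q i ≤ Q j := fun i j hij =>
    AddSubgroup.map_mono (Ksub_mono F α hij)
  set I : (Vsp ⧸ Nsub F) → ℕ := fun x => if h : ∃ i, x ∈ Q i then h.choose else 0 with hI
  set i₀ : ℕ := 1 + Finset.univ.sup I with hi₀
  refine ⟨i₀, by omega, ?_⟩
  intro i hi
  have hQeq : Q i = Q i₀ := by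
    apply le_antisymm
    · intro x hx
      have hex : ∃ j, x ∈ Q j := ⟨i, hx⟩
      have hxI : x ∈ Q (I x) := by
        show x ∈ Q (if h : ∃ j, x ∈ Q j then h.choose else 0)
        rw [dif_pos hex]
        exact hex.choose_spec
      have hIle : I x ≤ i₀ := by
        rw [hi₀]
        have := Finset.le_sup (f := I) (Finset.mem_univ x)
        omega
      exact hQmono (I x) i₀ hIle hxI
    · exact hQmono i₀ i hi
  have hcom : ∀ j, AddSubgroup.comap mkq (Q j) = Ksub F α j := by
    intro j
    rw [hQ]
    show AddSubgroup.comap mkq (AddSubgroup.map mkq (Ksub F α j)) = _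
    rw [AddSubgroup.comap_map_eq, QuotientAddGroup.ker_mk']
    exact sup_eq_left.mpr (Nsub_le_Ksub F α j)
  rw [← hcom i, ← hcom i₀, hQeq]

end Main

lemma primes_unbounded (p : ℕ → ℕ) (hp : ∀ i, 1 ≤ i → (p i).Prime)
    (hinj : ∀ i j, 1 ≤ i → 1 ≤ j → p i = p j → i = j) (i₀ : ℕ) (hi₀ : 1 ≤ i₀) (B : ℕ) :
    ∃ i, i₀ ≤ i ∧ B < p i := by
  by_contra hcon
  push_neg at hcon
  have hmaps : ∀ i ∈ Finset.Icc i₀ (i₀ + B), p i ∈ Finset.Icc 2 B := by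
    intro i hi
    rw [Finset.mem_Icc] at hi ⊢
    exact ⟨(hp i (by omega)).two_le, hcon i hi.1⟩
  have hinj' : Set.InjOn p (Finset.Icc i₀ (i₀ + B)) := by
    intro a ha b hb hab
    rw [Finset.coe_Icc, Set.mem_Icc] at ha hb
    exact hinj a b (by omega) (by omega) hab
  have hcard := Finset.card_le_card_of_injOn p hmaps hinj'
  rw [Nat.card_Icc, Nat.card_Icc] at hcard
  omega

lemma stepA (p : ℕ → ℕ) (hp : ∀ i, 1 ≤ i → (p i).Prime)
    (hinj : ∀ i j, 1 ≤ i → 1 ≤ j → p i = p j → i = j) (K : AddSubgroup Vsp)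
    (i₀ : ℕ) (hi₀ : 1 ≤ i₀) (z : ZG)
    (hz : ∀ i, i₀ ≤ i → z ∈ Ideal.span {((p i : ℤ) : ZG)} + augV K) : z ∈ augV K := by
  rw [mem_augV_iff]
  ext w
  show (piK K z) w = 0
  have hdvd : ∀ i, i₀ ≤ i → ((p i : ℤ)) ∣ (piK K z) w := by
    intro i hi
    obtain ⟨s, hs, y, hy, rfl⟩ := Submodule.mem_sup.mp (hz i hi)
    obtain ⟨a, ha⟩ := Ideal.mem_span_singleton'.mp hs
    have hpy : piK K y = 0 := (mem_augV_iff K y).mp hy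
    have hsa : s = (p i : ℤ) • a := by
      rw [← ha]
      have h1 : ((p i : ℤ) : ZG) = (p i : ℤ) • (1 : ZG) := by simp
      rw [h1, mul_smul_comm, mul_one]
    rw [map_add, hpy, add_zero, hsa, map_smul]
    rw [Finsupp.smul_apply, smul_eq_mul]
    exact dvd_mul_right _ _
  obtain ⟨i, hi, hB⟩ := primes_unbounded p hp hinj i₀ hi₀ ((piK K z) w).natAbs
  refine Int.eq_zero_of_abs_lt_dvd (hdvd i hi) ?_
  rw [Int.abs_eq_natAbs]
  exact_mod_cast hB

-- Part 11: the descending induction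
def AnnGe (p : ℕ → ℕ) (α : Y) (j : ℕ) : Ideal ZG :=
  ⨅ (i : ℕ) (_ : j ≤ i ∧ 1 ≤ i), AnnU p α i

lemma mem_AnnGe (p : ℕ → ℕ) (α : Y) (j : ℕ) (z : ZG) :
    z ∈ AnnGe p α j ↔ ∀ i : ℕ, j ≤ i → 1 ≤ i → z ∈ AnnU p α i := by
  rw [AnnGe]
  simp only [Submodule.mem_iInf]
  exact ⟨fun h i h1 h2 => h i ⟨h1, h2⟩, fun h i hi => h i hi.1 hi.2⟩

lemma augV_Hsub_le_AnnGe (p : ℕ → ℕ) (α : Y) (j : ℕ) :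
    augV (Hsub α j) ≤ AnnGe p α j := by
  intro z hz
  rw [mem_AnnGe]
  intro i hji _
  rw [mem_AnnU]
  exact augV_smul_ui_eq_zero p α i z (augV_mono (Hsub_mono α hji) hz)

lemma p_smul_mem_AnnGe (p : ℕ → ℕ) (α : Y) (j : ℕ) (hj : 1 ≤ j) (a : ZG)
    (ha : a ∈ AnnGe p α (j + 1)) : (p j : ℤ) • a ∈ AnnGe p α j := by
  rw [mem_AnnGe]
  intro i hji h1i
  rcases eq_or_lt_of_le hji with rfl | hlt
  · rw [mem_AnnU, smul_assoc, p_zsmul_ui]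
  · exact Submodule.smul_of_tower_mem _ _ ((mem_AnnGe p α (j+1) a).mp ha i hlt h1i)

section MainTwo

variable (F : Type) [AddCommGroup F] [Module ZG F] [Finite F]

lemma lemmaQ (p : ℕ → ℕ) (hp : ∀ i, 1 ≤ i → (p i).Prime)
    (hinj : ∀ i j, 1 ≤ i → 1 ≤ j → p i = p j → i = j) (α : Y) (i₀ : ℕ)
    (hstab : ∀ i, i₀ ≤ i → Ksub F α i = Ksub F α i₀) :
    ∀ m : ℕ, ∀ j : ℕ, 1 ≤ j → j + m = i₀ → ∀ c : ZG, c ∈ augV (Ksub F α i₀) →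
      (∀ i, j ≤ i → 1 ≤ i → c ∈ Ideal.span {((p i : ℤ) : ZG)} + augV (Ksub F α i)) →
      c ∈ AnnGe p α j + augV (Nsub F) := by
  intro m
  induction m with
  | zero =>
    intro j hj hji₀ c hc _
    subst hji₀
    have h1 : c ∈ augV (Hsub α (j + 0)) + augV (Nsub F) := augV_sup_le _ _ hc
    obtain ⟨y, hy, w, hw, rfl⟩ := Submodule.mem_sup.mp h1
    exact Submodule.add_mem _
      (Submodule.mem_sup_left (augV_Hsub_le_AnnGe p α j hy))
      (Submodule.mem_sup_right hw)
  | succ m ih =>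
    intro j hj hji₀ c hc hcond
    have hjlt : j + 1 ≤ i₀ := by omega
    have hKle : Ksub F α j ≤ Ksub F α i₀ := Ksub_mono F α (by omega)
    have hq0 : ((p j : ℤ)) ≠ 0 := Int.natCast_ne_zero.mpr (hp j hj).ne_zero
    obtain ⟨y, hy, u, hu, hcyu⟩ := lemmaP hKle (p j : ℤ) hq0 c hc (hcond j le_rfl hj)
    -- u satisfies the conditions from j+1 on
    have hu_cond : ∀ i, j + 1 ≤ i → 1 ≤ i →
        u ∈ Ideal.span {((p i : ℤ) : ZG)} + augV (Ksub F α i) := by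
      intro i hi h1i
      set E := Ideal.span {((p i : ℤ) : ZG)} + augV (Ksub F α i) with hE
      have hcE : c ∈ E := hcond i (by omega) h1i
      have hyE : y ∈ E :=
        Submodule.mem_sup_right (augV_mono (Ksub_mono F α (by omega)) hy)
      have hqu : (p j : ℤ) • u ∈ E := by
        have : (p j : ℤ) • u = c - y := by rw [hcyu]; abel
        rw [this]
        exact Submodule.sub_mem _ hcE hyE
      -- coprimality
      have hco : IsCoprime ((p j : ℤ)) ((p i : ℤ)) := by
        rw [Int.isCoprime_iff_gcd_eq_one, Int.gcd_natCast_natCast]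
        exact (Nat.coprime_primes (hp j hj) (hp i h1i)).mpr
          (fun hpq => absurd (hinj j i hj h1i hpq) (by omega))
      obtain ⟨A, B, hAB⟩ := hco
      have hrw : u = A • ((p j : ℤ) • u) + (B * (p i : ℤ)) • u := by
        rw [smul_smul, ← add_smul]
        have : A * (p j : ℤ) + B * (p i : ℤ) = 1 := hAB
        rw [this, one_smul]
      rw [hrw]
      refine Submodule.add_mem _ (Submodule.smul_of_tower_mem _ A hqu) ?_
      have hpu : (p i : ℤ) • u ∈ Ideal.span {((p i : ℤ) : ZG)} := by
        rw [Ideal.mem_span_singleton']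
        refine ⟨u, ?_⟩
        have h1 : ((p i : ℤ) : ZG) = (p i : ℤ) • (1 : ZG) := by simp
        rw [h1, mul_smul_comm, mul_one]
      have : (B * (p i : ℤ)) • u = B • ((p i : ℤ) • u) := by rw [smul_smul]
      rw [this]
      exact Submodule.mem_sup_left (Submodule.smul_of_tower_mem _ B hpu)
    have hIH := ih (j + 1) (by omega) (by omega) u hu hu_cond
    obtain ⟨a', ha', w, hw, huaw⟩ := Submodule.mem_sup.mp hIH
    have hy' : y ∈ augV (Hsub α j) + augV (Nsub F) := augV_sup_le _ _ hy
    obtain ⟨y₁, hy₁, w₁, hw₁, hyw⟩ := Submodule.mem_sup.mp hy'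
    have hceq : c = (y₁ + (p j : ℤ) • a') + (w₁ + (p j : ℤ) • w) := by
      rw [hcyu, ← hyw, ← huaw, smul_add]
      abel
    rw [hceq]
    refine Submodule.add_mem _ (Submodule.mem_sup_left ?_) (Submodule.mem_sup_right ?_)
    · exact Submodule.add_mem _ (augV_Hsub_le_AnnGe p α j hy₁)
        (p_smul_mem_AnnGe p α j hj a' ha')
    · exact Submodule.add_mem _ hw₁ (Submodule.smul_of_tower_mem _ _ hw)

end MainTwo

-- Part 12: the transfer of finite quotients
lemma key_transfer (p : ℕ → ℕ) (hp : ∀ i, 1 ≤ i → (p i).Prime)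
    (hinj : ∀ i j, 1 ≤ i → 1 ≤ j → p i = p j → i = j) (α β : Y)
    (F : Type) [AddCommGroup F] [Module ZG F] [Finite F] :
    Jl p β ≤ Jl p α + augV (Nsub F) := by
  intro z hz
  obtain ⟨i₀, hi₀, hstab⟩ := Ksub_stab F α
  have hcomp : ∀ i, 1 ≤ i → z ∈ Ideal.span {((p i : ℤ) : ZG)} + augV (Ksub F α i) := by
    intro i h1i
    have h0 := (mem_Jl_iff p β z).mp hz ⟨i, h1i⟩
    have h1 := component_mem p β i (hp i h1i).pos z h0
    have hle : Ideal.span {((p i : ℤ) : ZG)} + augV (Hsub β i)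
        ≤ Ideal.span {((p i : ℤ) : ZG)} + augV (Ksub F α i) := by
      rw [Submodule.add_eq_sup, Submodule.add_eq_sup]
      exact sup_le_sup le_rfl (augV_mono (Hsub_le_Ksub_other F α β i))
    exact hle h1
  have hsA : z ∈ augV (Ksub F α i₀) := by
    apply stepA p hp hinj (Ksub F α i₀) i₀ hi₀ z
    intro i hi
    have := hcomp i (by omega)
    rwa [hstab i hi] at this
  have hQ := lemmaQ F p hp hinj α i₀ hstab (i₀ - 1) 1 le_rfl (by omega) z hsA
    (fun i h1i _ => hcomp i h1i)
  have hAnn : AnnGe p α 1 ≤ Jl p α := by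
    intro w hw
    rw [Jl_eq_iInf]
    intro i h1i
    exact (mem_AnnGe p α 1 w).mp hw i h1i h1i
  have hle2 : AnnGe p α 1 + augV (Nsub F) ≤ Jl p α + augV (Nsub F) := by
    rw [Submodule.add_eq_sup, Submodule.add_eq_sup]
    exact sup_le_sup hAnn le_rfl
  exact hle2 hQ

lemma transfer_dir (p : ℕ → ℕ) (hp : ∀ i, 1 ≤ i → (p i).Prime)
    (hinj : ∀ i j, 1 ≤ i → 1 ≤ j → p i = p j → i = j) (α β : Y)
    (F : Type) [AddCommGroup F] [Module ZG F] [Finite F]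
    (h : ∃ φ : ↥(Ml p α) →ₗ[ZG] F, Function.Surjective φ) :
    ∃ ψ : ↥(Ml p β) →ₗ[ZG] F, Function.Surjective ψ := by
  obtain ⟨φ, hφ⟩ := h
  set uα : ↥(Ml p α) := ⟨ul p α, Submodule.mem_span_singleton_self _⟩ with huα
  set x : F := φ uα with hx
  set θ := LinearMap.toSpanSingleton ZG F x with hθ
  have hker : Jl p α + augV (Nsub F) ≤ LinearMap.ker θ := by
    rw [Submodule.add_eq_sup, sup_le_iff]
    constructor
    · intro z hz
      rw [LinearMap.mem_ker, hθ, LinearMap.toSpanSingleton_apply, hx, ← map_smul]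
      have hz0 : z • uα = 0 := by
        apply Subtype.ext
        show z • (ul p α) = 0
        have := LinearMap.mem_ker.mp hz
        rwa [LinearMap.toSpanSingleton_apply] at this
      rw [hz0, map_zero]
    · rw [augV, Ideal.span_le]
      rintro w ⟨v, hv, rfl⟩
      rw [SetLike.mem_coe, LinearMap.mem_ker, hθ, LinearMap.toSpanSingleton_apply,
        sub_smul, one_smul, hv x, sub_self]
  have hJβ : Jl p β ≤ LinearMap.ker θ :=
    le_trans (key_transfer p hp hinj α β F) hker
  set τβ := LinearMap.toSpanSingleton ZG (∀ i : Idx, Ui p β i.1) (ul p β) with hτ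
  have hkerτ : LinearMap.ker τβ ≤ LinearMap.ker θ := hJβ
  have hrange : Ml p β = LinearMap.range τβ :=
    LinearMap.span_singleton_eq_range ZG (∀ i : Idx, Ui p β i.1) (ul p β)
  set eqv : ↥(Ml p β) ≃ₗ[ZG] ↥(LinearMap.range τβ) := LinearEquiv.ofEq _ _ hrange
  set qiso : ↥(LinearMap.range τβ) ≃ₗ[ZG] (ZG ⧸ LinearMap.ker τβ) :=
    (LinearMap.quotKerEquivRange τβ).symm
  set ψ₀ : (ZG ⧸ LinearMap.ker τβ) →ₗ[ZG] F := Submodule.liftQ _ θ hkerτ with hψ₀def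
  have hψ₀ : Function.Surjective ψ₀ := by
    intro yF
    obtain ⟨mα, hmα⟩ := hφ yF
    obtain ⟨z, hz⟩ := (Submodule.mem_span_singleton).mp mα.2
    refine ⟨Submodule.Quotient.mk z, ?_⟩
    rw [hψ₀def, Submodule.liftQ_apply, hθ, LinearMap.toSpanSingleton_apply, hx, ← map_smul]
    have hzu : z • uα = mα := by
      apply Subtype.ext
      show z • (ul p α) = (mα : ∀ i : Idx, Ui p α i.1)
      exact hz
    rw [hzu, hmα]
  refine ⟨ψ₀.comp ((qiso.toLinearMap).comp eqv.toLinearMap), ?_⟩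
  intro yF
  obtain ⟨q, hq⟩ := hψ₀ yF
  refine ⟨eqv.symm (qiso.symm q), ?_⟩
  rw [LinearMap.comp_apply, LinearMap.comp_apply]
  rw [LinearEquiv.coe_coe, LinearEquiv.coe_coe, LinearEquiv.apply_symm_apply,
    LinearEquiv.apply_symm_apply]
  exact hq

theorem stmt11 (p : ℕ → ℕ) (hp : ∀ i, 1 ≤ i → (p i).Prime)
    (hinj : ∀ i j, 1 ≤ i → 1 ≤ j → p i = p j → i = j) (α β : Y)
    (F : Type) [AddCommGroup F] [Module ZG F] [Finite F] :
    (∃ φ : ↥(Ml p α) →ₗ[ZG] F, Function.Surjective φ) ↔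
    (∃ φ : ↥(Ml p β) →ₗ[ZG] F, Function.Surjective φ) :=
  ⟨transfer_dir p hp hinj α β F, transfer_dir p hp hinj β α F⟩
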